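/- Let c_1,…,c_n be reals with c_1 = 0 and c_n = 1, and let d_1,…,d_n be reals with d_1 = d_n = 1 and d_i ≠ 0 for all i. Set A = F·D, Ã = T·(D·A·G)ᵀ·T, C = diag(c_1,…,c_n), and C̃ = I − T·C·T. Then Tr(P·Ã·C̃·C̃) = Tr(P·A·C) − Tr(P·A·C·C) + Tr(P·A·A·C). -/

import Mathlib

open Finset Matrix
/-- The matrix `D` with entries `d_{ij}`: `0` for `i < j`, `d_i` for `i = j`, and
`-d_j · (∏_{k=j+1}^{i-1} (1 - d_k)) · d_i` for `i > j`. -/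
def Dmat (n : ℕ) (d : Fin n → ℝ) : Matrix (Fin n) (Fin n) ℝ :=
  Matrix.of fun i j =>
    if i < j then 0
    else if i = j then d i
    else -(d j) * (∏ k ∈ Finset.Ioo j i, (1 - d k)) * d i

/-- The lower-triangular matrix `G` with `G_{ii} = 1/d_i`, `G_{ij} = 1` for `i > j`. -/
noncomputable def Gmat (n : ℕ) (d : Fin n → ℝ) : Matrix (Fin n) (Fin n) ℝ :=
  Matrix.of fun i j => if i = j then 1 / d i else if j < i then 1 else 0

/-- The matrix `F` with `F_{ij} = c_i - c_j` for `i > j` and `0` otherwise. -/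
def Fmat (n : ℕ) (c : Fin n → ℝ) : Matrix (Fin n) (Fin n) ℝ :=
  Matrix.of fun i j => if j < i then c i - c j else 0

/-- The antidiagonal permutation matrix `T`, `T_{ij} = 1` iff `i + j = n + 1` (1-based). -/
def Tmat (n : ℕ) : Matrix (Fin n) (Fin n) ℝ :=
  Matrix.of fun i j => if (i : ℕ) + (j : ℕ) + 1 = n then 1 else 0

/-- The matrix `P` whose last column consists of ones and all other entries are `0`. -/
def Pmat (n : ℕ) : Matrix (Fin n) (Fin n) ℝ :=
  Matrix.of fun _ j => if (j : ℕ) + 1 = n then 1 else 0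

namespace Stmt14Aux

noncomputable def e (n : ℕ) (d : Fin n → ℝ) : ℕ → ℝ :=
  fun k => if h : k < n then d ⟨k, h⟩ else 1

noncomputable def De (n : ℕ) (d : Fin n → ℝ) : ℕ → ℕ → ℝ := fun i j =>
  if i < j then 0 else if i = j then e n d i
  else -(e n d j) * (∏ t ∈ Finset.Ioo j i, (1 - e n d t)) * e n d i

variable {n : ℕ} (d : Fin n → ℝ)

lemma e_val (i : Fin n) : e n d (i : ℕ) = d i := by
  simp [e, i.isLt]

lemma natA (j : ℕ) : ∀ (i : ℕ), j < i →
    ∑ k ∈ Finset.Ico j i, De n d k j = e n d j * ∏ t ∈ Finset.Ioo j i, (1 - e n d t) := by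
  intro i h
  induction i, h using Nat.le_induction with
  | base =>
      have h1 : Finset.Ico j (j + 1) = {j} := by
        ext t; simp only [Finset.mem_Ico, Finset.mem_singleton]; omega
      have h2 : Finset.Ioo j (j + 1) = ∅ := by
        ext t; simp only [Finset.mem_Ioo, Finset.notMem_empty, iff_false, not_and, not_lt]; omega
      simp [h1, h2, De]
  | succ i hi ih =>
      have hDe : De n d i j = -(e n d j) * (∏ t ∈ Finset.Ioo j i, (1 - e n d t)) * e n d i := by
        simp only [De]
        rw [if_neg (by omega), if_neg (by omega)]
      have hIoo : Finset.Ioo j (i + 1) = insert i (Finset.Ioo j i) := by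
        ext t; simp; omega
      rw [Finset.sum_Ico_succ_top (by omega), ih, hDe, hIoo,
        Finset.prod_insert (by simp)]
      ring

lemma natB (i : ℕ) : ∀ (m j : ℕ), i = j + 1 + m →
    ∑ k ∈ Finset.Ioc j i, De n d i k = e n d i * ∏ t ∈ Finset.Ioo j i, (1 - e n d t) := by
  intro m
  induction m with
  | zero =>
      intro j h
      subst h
      have h1 : Finset.Ioc j (j + 1 + 0) = {j + 1} := by
        ext t; simp only [Finset.mem_Ioc, Finset.mem_singleton]; omega
      have h2 : Finset.Ioo j (j + 1 + 0) = ∅ := by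
        ext t; simp only [Finset.mem_Ioo, Finset.notMem_empty, iff_false, not_and, not_lt]; omega
      simp [h1, h2, De]
  | succ m ih =>
      intro j h
      have h1 : Finset.Ioc j i = insert (j + 1) (Finset.Ioc (j + 1) i) := by
        ext t; simp; omega
      have h2 : Finset.Ioo j i = insert (j + 1) (Finset.Ioo (j + 1) i) := by
        ext t; simp; omega
      have hDe : De n d i (j + 1) =
          -(e n d (j + 1)) * (∏ t ∈ Finset.Ioo (j + 1) i, (1 - e n d t)) * e n d i := by
        simp only [De]
        rw [if_neg (by omega), if_neg (by omega)]
      rw [h1, Finset.sum_insert (by simp), ih (j + 1) (by omega), hDe, h2,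
        Finset.prod_insert (by simp)]
      ring

lemma natB' (j i : ℕ) (h : j < i) :
    ∑ k ∈ Finset.Ioc j i, De n d i k = e n d i * ∏ t ∈ Finset.Ioo j i, (1 - e n d t) :=
  natB d i (i - j - 1) j (by omega)

lemma Dmat_eq (i j : Fin n) : Dmat n d i j = De n d (i : ℕ) (j : ℕ) := by
  have hprod : ∏ t ∈ Finset.Ioo j i, (1 - d t) =
      ∏ t ∈ Finset.Ioo (j : ℕ) (i : ℕ), (1 - e n d t) := by
    rw [← Fin.map_valEmbedding_Ioo, Finset.prod_map]
    exact Finset.prod_congr rfl fun t _ => by rw [Fin.valEmbedding_apply, e_val]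
  simp only [Dmat, De, Matrix.of_apply, Fin.lt_def, Fin.ext_iff]
  split_ifs
  · rfl
  · rw [e_val]
  · rw [e_val, e_val, hprod]


def Lmat (n : ℕ) : Matrix (Fin n) (Fin n) ℝ :=
  Matrix.of fun i j => if j < i then 1 else 0

lemma LD_eq (hd : ∀ i : Fin n, d i ≠ 0) :
    Lmat n * Dmat n d = 1 - Matrix.diagonal (fun i => (d i)⁻¹) * Dmat n d := by
  ext i j
  rw [Matrix.mul_apply]
  have hterm : ∀ k : Fin n, Lmat n i k * Dmat n d k j =
      (fun m : ℕ => if (j : ℕ) ≤ m ∧ m < (i : ℕ) then De n d m (j : ℕ) else 0) (k : ℕ) := by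
    intro k
    rw [Dmat_eq]
    simp only [Lmat, Matrix.of_apply, Fin.lt_def, De]
    split_ifs <;> try ring
    all_goals exfalso
    all_goals omega
  rw [Finset.sum_congr rfl fun k _ => hterm k,
    Fin.sum_univ_eq_sum_range (fun m : ℕ => if (j : ℕ) ≤ m ∧ m < (i : ℕ) then De n d m (j : ℕ) else 0) n,
    ← Finset.sum_filter]
  have hIco : Finset.filter (fun m => (j : ℕ) ≤ m ∧ m < (i : ℕ)) (Finset.range n)
      = Finset.Ico (j : ℕ) (i : ℕ) := by
    ext t
    simp only [Finset.mem_filter, Finset.mem_range, Finset.mem_Ico]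
    have := i.isLt
    omega
  rw [hIco, Matrix.sub_apply, Matrix.one_apply, Matrix.diagonal_mul, Dmat_eq]
  rcases lt_trichotomy (j : ℕ) (i : ℕ) with h | h | h
  · rw [natA d (j : ℕ) (i : ℕ) h, if_neg (fun hh => by rw [Fin.ext_iff] at hh; omega)]
    have hDe : De n d (i : ℕ) (j : ℕ) =
        -(e n d (j : ℕ)) * (∏ t ∈ Finset.Ioo (j : ℕ) (i : ℕ), (1 - e n d t)) * e n d (i : ℕ) := by
      simp only [De]; rw [if_neg (by omega), if_neg (by omega)]
    rw [hDe, e_val, e_val]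
    field_simp [hd i]
    try ring
  · have hij : i = j := Fin.ext h.symm
    subst hij
    have hempty : Finset.Ico (i : ℕ) (i : ℕ) = ∅ := Finset.Ico_self _
    have hDe : De n d (i : ℕ) (i : ℕ) = d i := by
      simp [De, e_val]
    rw [hempty, Finset.sum_empty, hDe]
    simp [inv_mul_cancel₀ (hd i), mul_inv_cancel₀ (hd i)]
  · have hempty : Finset.Ico (j : ℕ) (i : ℕ) = ∅ := by
      ext t; simp only [Finset.mem_Ico, Finset.notMem_empty, iff_false, not_and, not_lt]; omega
    have hDe : De n d (i : ℕ) (j : ℕ) = 0 := by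
      simp only [De]; rw [if_pos h]
    have hne : ¬ (i = j) := fun hh => by rw [Fin.ext_iff] at hh; omega
    rw [hempty, Finset.sum_empty, hDe]
    simp [hne]

lemma DL_eq (hd : ∀ i : Fin n, d i ≠ 0) :
    Dmat n d * Lmat n = 1 - Dmat n d * Matrix.diagonal (fun i => (d i)⁻¹) := by
  ext i j
  rw [Matrix.mul_apply]
  have hterm : ∀ k : Fin n, Dmat n d i k * Lmat n k j =
      (fun m : ℕ => if (j : ℕ) < m ∧ m ≤ (i : ℕ) then De n d (i : ℕ) m else 0) (k : ℕ) := by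
    intro k
    rw [Dmat_eq]
    simp only [Lmat, Matrix.of_apply, Fin.lt_def, De]
    split_ifs <;> try ring
    all_goals exfalso
    all_goals omega
  rw [Finset.sum_congr rfl fun k _ => hterm k,
    Fin.sum_univ_eq_sum_range (fun m : ℕ => if (j : ℕ) < m ∧ m ≤ (i : ℕ) then De n d (i : ℕ) m else 0) n,
    ← Finset.sum_filter]
  have hIoc : Finset.filter (fun m => (j : ℕ) < m ∧ m ≤ (i : ℕ)) (Finset.range n)
      = Finset.Ioc (j : ℕ) (i : ℕ) := by
    ext t
    simp only [Finset.mem_filter, Finset.mem_range, Finset.mem_Ioc]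
    have := i.isLt
    omega
  rw [hIoc, Matrix.sub_apply, Matrix.one_apply, Matrix.mul_diagonal, Dmat_eq]
  rcases lt_trichotomy (j : ℕ) (i : ℕ) with h | h | h
  · rw [natB' d (j : ℕ) (i : ℕ) h, if_neg (fun hh => by rw [Fin.ext_iff] at hh; omega)]
    have hDe : De n d (i : ℕ) (j : ℕ) =
        -(e n d (j : ℕ)) * (∏ t ∈ Finset.Ioo (j : ℕ) (i : ℕ), (1 - e n d t)) * e n d (i : ℕ) := by
      simp only [De]; rw [if_neg (by omega), if_neg (by omega)]
    rw [hDe, e_val, e_val]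
    field_simp [hd j]
    try ring
  · have hij : i = j := Fin.ext h.symm
    subst hij
    have hempty : Finset.Ioc (i : ℕ) (i : ℕ) = ∅ := Finset.Ioc_self _
    have hDe : De n d (i : ℕ) (i : ℕ) = d i := by
      simp [De, e_val]
    rw [hempty, Finset.sum_empty, hDe]
    simp [inv_mul_cancel₀ (hd i), mul_inv_cancel₀ (hd i)]
  · have hempty : Finset.Ioc (j : ℕ) (i : ℕ) = ∅ := by
      ext t; simp only [Finset.mem_Ioc, Finset.notMem_empty, iff_false, not_and, not_le]; omega
    have hDe : De n d (i : ℕ) (j : ℕ) = 0 := by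
      simp only [De]; rw [if_pos h]
    have hne : ¬ (i = j) := fun hh => by rw [Fin.ext_iff] at hh; omega
    rw [hempty, Finset.sum_empty, hDe]
    simp [hne]

lemma colsum (hn : 1 < n) (hdn : d ⟨n - 1, by omega⟩ = 1) (j : Fin n) :
    ∑ i : Fin n, Dmat n d i j = if j = (⟨n - 1, by omega⟩ : Fin n) then 1 else 0 := by
  have hj := j.isLt
  rw [Finset.sum_congr rfl fun k (_ : k ∈ Finset.univ) =>
    (Dmat_eq d k j : Dmat n d k j = (fun m : ℕ => De n d m (j : ℕ)) (k : ℕ)),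
    Fin.sum_univ_eq_sum_range (fun m : ℕ => De n d m (j : ℕ)) n]
  have hsplit : ∑ m ∈ Finset.range n, De n d m (j : ℕ)
      = ∑ m ∈ Finset.Ico (j : ℕ) n, De n d m (j : ℕ) := by
    rw [Finset.range_eq_Ico]
    apply (Finset.sum_subset (by apply Finset.Ico_subset_Ico <;> omega) _).symm
    intro x hx hx2
    simp only [Finset.mem_Ico] at hx hx2
    simp only [De]
    rw [if_pos (by omega)]
  rw [hsplit, natA d (j : ℕ) n hj]
  by_cases hjl : j = (⟨n - 1, by omega⟩ : Fin n)
  · rw [if_pos hjl]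
    have hIoo : Finset.Ioo (j : ℕ) n = ∅ := by
      ext t
      simp only [Finset.mem_Ioo, Finset.notMem_empty, iff_false, not_and, not_lt]
      have : (j : ℕ) = n - 1 := by rw [hjl]
      omega
    rw [hIoo, Finset.prod_empty, e_val, hjl, hdn, mul_one]
  · rw [if_neg hjl]
    have hjlt : (j : ℕ) < n - 1 := by
      rcases lt_or_ge (j : ℕ) (n - 1) with h | h
      · exact h
      · exact absurd (Fin.ext (by omega : (j : ℕ) = n - 1)) hjl
    have hmem : n - 1 ∈ Finset.Ioo (j : ℕ) n := by
      simp only [Finset.mem_Ioo]; omega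
    rw [Finset.prod_eq_zero hmem (by
      have : e n d (n - 1) = d ⟨n - 1, by omega⟩ := by
        simp only [e]; rw [dif_pos (by omega)]
      rw [this, hdn]; ring), mul_zero]


lemma F_decomp (c : Fin n → ℝ) :
    Fmat n c = Matrix.diagonal c * Lmat n - Lmat n * Matrix.diagonal c := by
  ext i j
  simp only [Fmat, Lmat, Matrix.sub_apply, Matrix.of_apply, Matrix.diagonal_mul,
    Matrix.mul_diagonal]
  split_ifs <;> ring

lemma G_decomp : Gmat n d = Matrix.diagonal (fun i => (d i)⁻¹) + Lmat n := by
  ext i j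
  simp only [Gmat, Lmat, Matrix.add_apply, Matrix.of_apply, Matrix.diagonal_apply]
  split_ifs <;> try ring
  all_goals exfalso
  all_goals simp_all [Fin.lt_def, Fin.ext_iff]
  all_goals omega

lemma DG_eq (hd : ∀ i : Fin n, d i ≠ 0) : Dmat n d * Gmat n d = 1 := by
  rw [G_decomp, Matrix.mul_add, DL_eq d hd]
  abel

lemma DFD (hd : ∀ i : Fin n, d i ≠ 0) (c : Fin n → ℝ) :
    Dmat n d * Fmat n c * Dmat n d =
      Dmat n d * Matrix.diagonal c - Matrix.diagonal c * Dmat n d := by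
  have h1 := LD_eq d hd
  have h2 := DL_eq d hd
  have hc : Matrix.diagonal c * Matrix.diagonal (fun i => (d i)⁻¹)
      = Matrix.diagonal (fun i => (d i)⁻¹) * Matrix.diagonal c := by
    have hcd : (fun i => c i * (d i)⁻¹) = (fun i => (d i)⁻¹ * c i) :=
      funext fun i => mul_comm _ _
    rw [Matrix.diagonal_mul_diagonal, Matrix.diagonal_mul_diagonal, hcd]
  calc Dmat n d * Fmat n c * Dmat n d
      = Dmat n d * Matrix.diagonal c * (Lmat n * Dmat n d)
        - Dmat n d * Lmat n * (Matrix.diagonal c * Dmat n d) := by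
        rw [F_decomp]; noncomm_ring
    _ = Dmat n d * Matrix.diagonal c * (1 - Matrix.diagonal (fun i => (d i)⁻¹) * Dmat n d)
        - (1 - Dmat n d * Matrix.diagonal (fun i => (d i)⁻¹)) * (Matrix.diagonal c * Dmat n d) := by
        rw [h1, h2]
    _ = Dmat n d * Matrix.diagonal c - Matrix.diagonal c * Dmat n d
        + Dmat n d * ((Matrix.diagonal (fun i => (d i)⁻¹) * Matrix.diagonal c
          - Matrix.diagonal c * Matrix.diagonal (fun i => (d i)⁻¹)) * Dmat n d) := by
        noncomm_ring
    _ = Dmat n d * Matrix.diagonal c - Matrix.diagonal c * Dmat n d := by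
        rw [hc]; simp

lemma traceP (hn : 1 < n) (M : Matrix (Fin n) (Fin n) ℝ) :
    Matrix.trace (Pmat n * M) = ∑ j, M ⟨n - 1, by omega⟩ j := by
  simp only [Matrix.trace, Matrix.diag_apply, Matrix.mul_apply, Pmat, Matrix.of_apply]
  have hterm : ∀ i k : Fin n, (if (k : ℕ) + 1 = n then (1 : ℝ) else 0) * M k i
      = if k = (⟨n - 1, by omega⟩ : Fin n) then M k i else 0 := by
    intro i k
    by_cases h : k = (⟨n - 1, by omega⟩ : Fin n)
    · rw [if_pos h, if_pos (by rw [h]; simp; omega), one_mul]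
    · rw [if_neg h, if_neg (fun hh => h (Fin.ext (by simp; omega))), zero_mul]
  rw [Finset.sum_congr rfl fun i _ => Finset.sum_congr rfl fun k _ => hterm i k]
  rw [Finset.sum_congr rfl fun i (_ : i ∈ Finset.univ) =>
    Finset.sum_ite_eq' Finset.univ (⟨n - 1, by omega⟩ : Fin n) (fun k => M k i)]
  simp

lemma T_apply (i j : Fin n) : Tmat n i j = if j = Fin.rev i then 1 else 0 := by
  simp only [Tmat, Matrix.of_apply]
  have := i.isLt
  have := j.isLt
  apply if_congr _ rfl rfl
  constructor
  · intro h; exact Fin.ext (by rw [Fin.val_rev]; omega)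
  · intro h; subst h; rw [Fin.val_rev]; omega

lemma T_apply' (i j : Fin n) : Tmat n i j = if i = Fin.rev j then 1 else 0 := by
  simp only [Tmat, Matrix.of_apply]
  have := i.isLt
  have := j.isLt
  apply if_congr _ rfl rfl
  constructor
  · intro h; exact Fin.ext (by rw [Fin.val_rev]; omega)
  · intro h; subst h; rw [Fin.val_rev]; omega

lemma Tmul_apply (M : Matrix (Fin n) (Fin n) ℝ) (i j : Fin n) :
    (Tmat n * M) i j = M (Fin.rev i) j := by
  rw [Matrix.mul_apply]
  have hterm : ∀ k : Fin n, Tmat n i k * M k j = if k = Fin.rev i then M k j else 0 := by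
    intro k
    rw [T_apply]
    split_ifs <;> ring
  rw [Finset.sum_congr rfl fun k _ => hterm k,
    Finset.sum_ite_eq' Finset.univ (Fin.rev i) (fun k => M k j)]
  simp

lemma mulT_apply (M : Matrix (Fin n) (Fin n) ℝ) (i j : Fin n) :
    (M * Tmat n) i j = M i (Fin.rev j) := by
  rw [Matrix.mul_apply]
  have hterm : ∀ k : Fin n, M i k * Tmat n k j = if k = Fin.rev j then M i k else 0 := by
    intro k
    rw [T_apply']
    split_ifs <;> ring
  rw [Finset.sum_congr rfl fun k _ => hterm k,
    Finset.sum_ite_eq' Finset.univ (Fin.rev j) (fun k => M i k)]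
  simp

end Stmt14Aux

theorem stmt_14 (n : ℕ) (hn : 2 ≤ n) (c d : Fin n → ℝ)
    (hc1 : c ⟨0, by omega⟩ = 0) (hcn : c ⟨n - 1, by omega⟩ = 1)
    (hd1 : d ⟨0, by omega⟩ = 1) (hdn : d ⟨n - 1, by omega⟩ = 1)
    (hd : ∀ i : Fin n, d i ≠ 0)
    (A Atil C Ctil : Matrix (Fin n) (Fin n) ℝ)
    (hA : A = Fmat n c * Dmat n d)
    (hAtil : Atil = Tmat n * (Dmat n d * A * Gmat n d)ᵀ * Tmat n)
    (hC : C = Matrix.diagonal c)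
    (hCtil : Ctil = 1 - Tmat n * C * Tmat n) :
    Matrix.trace (Pmat n * Atil * Ctil * Ctil) =
      Matrix.trace (Pmat n * A * C) - Matrix.trace (Pmat n * A * C * C) +
        Matrix.trace (Pmat n * A * A * C) := by
  classical
  have hc0 : c (⟨0, by omega⟩ : Fin n) = 0 := hc1
  have hcl : c (⟨n - 1, by omega⟩ : Fin n) = 1 := hcn
  have hDG : Dmat n d * Gmat n d = 1 := Stmt14Aux.DG_eq d hd
  have hDF : Dmat n d * A * Gmat n d = Dmat n d * Fmat n c := by
    rw [hA, ← Matrix.mul_assoc,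
      Matrix.mul_assoc (Dmat n d * Fmat n c) (Dmat n d) (Gmat n d), hDG, Matrix.mul_one]
  have hCt : Ctil = Matrix.diagonal (fun i => 1 - c (Fin.rev i)) := by
    rw [hCtil, hC]
    ext i j
    rw [Matrix.sub_apply, Stmt14Aux.mulT_apply, Stmt14Aux.Tmul_apply, Matrix.one_apply]
    simp only [Matrix.diagonal_apply, Fin.rev_inj]
    split_ifs <;> ring
  have hcol : ∀ j : Fin n, ∑ i : Fin n, Dmat n d i j
      = if j = (⟨n - 1, by omega⟩ : Fin n) then 1 else 0 := Stmt14Aux.colsum d hn hdn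
  have ha : ∀ j : Fin n, A (⟨n - 1, by omega⟩ : Fin n) j
      = (if j = (⟨n - 1, by omega⟩ : Fin n) then 1 else 0)
        - ∑ r : Fin n, c r * Dmat n d r j := by
    intro j
    rw [hA, Matrix.mul_apply]
    have hterm : ∀ r : Fin n, Fmat n c (⟨n - 1, by omega⟩ : Fin n) r * Dmat n d r j
        = (1 - c r) * Dmat n d r j := by
      intro r
      simp only [Fmat, Matrix.of_apply]
      by_cases h : r < (⟨n - 1, by omega⟩ : Fin n)
      · rw [if_pos h, hcl]
      · have h2 : ¬ ((r : ℕ) < n - 1) := fun hh => h (by rw [Fin.lt_def]; exact hh)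
        have hr : r = (⟨n - 1, by omega⟩ : Fin n) := by
          apply Fin.ext
          show (r : ℕ) = n - 1
          have := r.isLt
          omega
        rw [if_neg h, hr, hcl]
        ring
    rw [Finset.sum_congr rfl fun r _ => hterm r]
    simp only [sub_mul, one_mul]
    rw [Finset.sum_sub_distrib, hcol j]
  have hDA : ∀ r j : Fin n, (Dmat n d * A) r j
      = Dmat n d r j * c j - c r * Dmat n d r j := by
    intro r j
    have hh : Dmat n d * A = Dmat n d * Matrix.diagonal c - Matrix.diagonal c * Dmat n d := by
      rw [hA, ← Matrix.mul_assoc, Stmt14Aux.DFD d hd c]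
    rw [hh, Matrix.sub_apply, Matrix.mul_diagonal, Matrix.diagonal_mul]
  -- entries of products appearing in traces
  have hLent : ∀ j : Fin n, (Atil * Ctil * Ctil) (⟨n - 1, by omega⟩ : Fin n) j
      = (∑ r : Fin n, Dmat n d (Fin.rev j) r * c r)
        * (1 - c (Fin.rev j)) * (1 - c (Fin.rev j)) := by
    intro j
    have hAt : Atil (⟨n - 1, by omega⟩ : Fin n) j
        = ∑ r : Fin n, Dmat n d (Fin.rev j) r * c r := by
      rw [hAtil, Stmt14Aux.mulT_apply, Stmt14Aux.Tmul_apply, Matrix.transpose_apply, hDF]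
      have hrev : Fin.rev (⟨n - 1, by omega⟩ : Fin n) = (⟨0, by omega⟩ : Fin n) := by
        apply Fin.ext
        rw [Fin.val_rev]
        show n - (n - 1 + 1) = 0
        omega
      rw [hrev, Matrix.mul_apply]
      refine Finset.sum_congr rfl fun r _ => ?_
      have hF0 : Fmat n c r (⟨0, by omega⟩ : Fin n) = c r := by
        simp only [Fmat, Matrix.of_apply]
        by_cases h : (⟨0, by omega⟩ : Fin n) < r
        · rw [if_pos h, hc0, sub_zero]
        · have h2 : ¬ ((0 : ℕ) < (r : ℕ)) := fun hh => h (by rw [Fin.lt_def]; exact hh)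
          have hr : r = (⟨0, by omega⟩ : Fin n) := by
            apply Fin.ext
            show (r : ℕ) = 0
            omega
          rw [if_neg h, hr, hc0]
      rw [hF0]
    rw [hCt, Matrix.mul_diagonal, Matrix.mul_diagonal, hAt]
  have hAC : ∀ j : Fin n, (A * C) (⟨n - 1, by omega⟩ : Fin n) j
      = A (⟨n - 1, by omega⟩ : Fin n) j * c j := fun j => by rw [hC, Matrix.mul_diagonal]
  have hACC : ∀ j : Fin n, (A * C * C) (⟨n - 1, by omega⟩ : Fin n) j
      = A (⟨n - 1, by omega⟩ : Fin n) j * c j * c j := fun j => by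
    rw [hC, Matrix.mul_diagonal, Matrix.mul_diagonal]
  have hAAC : ∀ j : Fin n, (A * A * C) (⟨n - 1, by omega⟩ : Fin n) j
      = (∑ k : Fin n, A (⟨n - 1, by omega⟩ : Fin n) k * A k j) * c j := fun j => by
    rw [hC, Matrix.mul_diagonal, Matrix.mul_apply]
  -- scalar sum identities
  have e1 : ∑ k : Fin n, ∑ r : Fin n, Dmat n d k r * c r = 1 := by
    rw [Finset.sum_comm]
    have h1 : ∀ r : Fin n, ∑ k : Fin n, Dmat n d k r * c r
        = (if r = (⟨n - 1, by omega⟩ : Fin n) then 1 else 0) * c r := by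
      intro r
      rw [← Finset.sum_mul, hcol r]
    rw [Finset.sum_congr rfl fun r _ => h1 r]
    simp only [ite_mul, one_mul, zero_mul]
    rw [Finset.sum_ite_eq' Finset.univ (⟨n - 1, by omega⟩ : Fin n) c]
    simp [hcl]
  have hS1' : ∑ j : Fin n, (∑ r : Fin n, c r * Dmat n d r j) * c j
      = ∑ k : Fin n, ∑ r : Fin n, c k * Dmat n d k r * c r := by
    have h1 : ∀ j : Fin n, (∑ r : Fin n, c r * Dmat n d r j) * c j
        = ∑ r : Fin n, c r * Dmat n d r j * c j := fun j => Finset.sum_mul _ _ _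
    rw [Finset.sum_congr rfl fun j _ => h1 j]
    exact Finset.sum_comm
  have hS2' : ∑ j : Fin n, (∑ r : Fin n, c r * Dmat n d r j) * (c j * c j)
      = ∑ k : Fin n, ∑ r : Fin n, c k * Dmat n d k r * (c r * c r) := by
    have h1 : ∀ j : Fin n, (∑ r : Fin n, c r * Dmat n d r j) * (c j * c j)
        = ∑ r : Fin n, c r * Dmat n d r j * (c j * c j) := fun j => Finset.sum_mul _ _ _
    rw [Finset.sum_congr rfl fun j _ => h1 j]
    exact Finset.sum_comm
  have hS3' : ∑ j : Fin n, (∑ r : Fin n, c r * c r * Dmat n d r j) * c j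
      = ∑ k : Fin n, ∑ r : Fin n, c k * c k * Dmat n d k r * c r := by
    have h1 : ∀ j : Fin n, (∑ r : Fin n, c r * c r * Dmat n d r j) * c j
        = ∑ r : Fin n, c r * c r * Dmat n d r j * c j := fun j => Finset.sum_mul _ _ _
    rw [Finset.sum_congr rfl fun j _ => h1 j]
    exact Finset.sum_comm
  have hL : ∑ k : Fin n, (∑ r : Fin n, Dmat n d k r * c r) * (1 - c k) * (1 - c k)
      = 1 - 2 * (∑ k : Fin n, ∑ r : Fin n, c k * Dmat n d k r * c r)
        + (∑ k : Fin n, ∑ r : Fin n, c k * c k * Dmat n d k r * c r) := by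
    have hexp : ∀ k : Fin n, (∑ r : Fin n, Dmat n d k r * c r) * (1 - c k) * (1 - c k)
        = (∑ r : Fin n, Dmat n d k r * c r)
          - 2 * ((∑ r : Fin n, Dmat n d k r * c r) * c k)
          + (∑ r : Fin n, Dmat n d k r * c r) * (c k * c k) := fun k => by ring
    rw [Finset.sum_congr rfl fun k _ => hexp k, Finset.sum_add_distrib,
      Finset.sum_sub_distrib, e1]
    congr 1
    · congr 1
      rw [← Finset.mul_sum]
      congr 1
      refine Finset.sum_congr rfl fun k _ => ?_
      rw [Finset.sum_mul]
      exact Finset.sum_congr rfl fun r _ => by ring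
    · refine Finset.sum_congr rfl fun k _ => ?_
      rw [Finset.sum_mul]
      exact Finset.sum_congr rfl fun r _ => by ring
  have hR1 : ∑ j : Fin n, A (⟨n - 1, by omega⟩ : Fin n) j * c j
      = 1 - ∑ k : Fin n, ∑ r : Fin n, c k * Dmat n d k r * c r := by
    have h1 : ∀ j : Fin n, A (⟨n - 1, by omega⟩ : Fin n) j * c j
        = (if j = (⟨n - 1, by omega⟩ : Fin n) then 1 else 0) * c j
          - (∑ r : Fin n, c r * Dmat n d r j) * c j := fun j => by rw [ha j]; ring
    rw [Finset.sum_congr rfl fun j _ => h1 j, Finset.sum_sub_distrib, hS1', sub_left_inj]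
    simp only [ite_mul, one_mul, zero_mul]
    rw [Finset.sum_ite_eq' Finset.univ (⟨n - 1, by omega⟩ : Fin n) c]
    simp [hcl]
  have hR2 : ∑ j : Fin n, A (⟨n - 1, by omega⟩ : Fin n) j * c j * c j
      = 1 - ∑ k : Fin n, ∑ r : Fin n, c k * Dmat n d k r * (c r * c r) := by
    have h1 : ∀ j : Fin n, A (⟨n - 1, by omega⟩ : Fin n) j * c j * c j
        = (if j = (⟨n - 1, by omega⟩ : Fin n) then 1 else 0) * (c j * c j)
          - (∑ r : Fin n, c r * Dmat n d r j) * (c j * c j) := fun j => by rw [ha j]; ring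
    rw [Finset.sum_congr rfl fun j _ => h1 j, Finset.sum_sub_distrib, hS2', sub_left_inj]
    simp only [ite_mul, one_mul, zero_mul]
    rw [Finset.sum_ite_eq' Finset.univ (⟨n - 1, by omega⟩ : Fin n) (fun j => c j * c j)]
    simp [hcl]
  have hW : ∀ j : Fin n, ∑ k : Fin n, A (⟨n - 1, by omega⟩ : Fin n) k * A k j
      = A (⟨n - 1, by omega⟩ : Fin n) j
        - ((∑ r : Fin n, c r * Dmat n d r j) * c j
          - ∑ r : Fin n, c r * c r * Dmat n d r j) := by
    intro j
    have h1 : ∀ k : Fin n, A (⟨n - 1, by omega⟩ : Fin n) k * A k j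
        = (if k = (⟨n - 1, by omega⟩ : Fin n) then 1 else 0) * A k j
          - (∑ r : Fin n, c r * Dmat n d r k) * A k j := fun k => by rw [ha k]; ring
    rw [Finset.sum_congr rfl fun k _ => h1 k, Finset.sum_sub_distrib]
    congr 1
    · simp only [ite_mul, one_mul, zero_mul]
      rw [Finset.sum_ite_eq' Finset.univ (⟨n - 1, by omega⟩ : Fin n) (fun k => A k j)]
      simp
    · have h2 : ∀ k : Fin n, (∑ r : Fin n, c r * Dmat n d r k) * A k j
          = ∑ r : Fin n, c r * (Dmat n d r k * A k j) := by
        intro k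
        rw [Finset.sum_mul]
        exact Finset.sum_congr rfl fun r _ => by ring
      rw [Finset.sum_congr rfl fun k _ => h2 k, Finset.sum_comm]
      have h3 : ∀ r : Fin n, ∑ k : Fin n, c r * (Dmat n d r k * A k j)
          = c r * (Dmat n d r j * c j - c r * Dmat n d r j) := by
        intro r
        rw [← Finset.mul_sum, ← Matrix.mul_apply, hDA r j]
      rw [Finset.sum_congr rfl fun r _ => h3 r]
      have h4 : ∀ r : Fin n, c r * (Dmat n d r j * c j - c r * Dmat n d r j)
          = c r * Dmat n d r j * c j - c r * c r * Dmat n d r j := fun r => by ring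
      rw [Finset.sum_congr rfl fun r _ => h4 r, Finset.sum_sub_distrib]
      congr 1
      rw [← Finset.sum_mul]
  have hR3 : ∑ j : Fin n, (∑ k : Fin n, A (⟨n - 1, by omega⟩ : Fin n) k * A k j) * c j
      = (1 - ∑ k : Fin n, ∑ r : Fin n, c k * Dmat n d k r * c r)
        - (∑ k : Fin n, ∑ r : Fin n, c k * Dmat n d k r * (c r * c r))
        + (∑ k : Fin n, ∑ r : Fin n, c k * c k * Dmat n d k r * c r) := by
    have h1 : ∀ j : Fin n, (∑ k : Fin n, A (⟨n - 1, by omega⟩ : Fin n) k * A k j) * c j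
        = A (⟨n - 1, by omega⟩ : Fin n) j * c j
          - (∑ r : Fin n, c r * Dmat n d r j) * (c j * c j)
          + (∑ r : Fin n, c r * c r * Dmat n d r j) * c j := fun j => by rw [hW j]; ring
    rw [Finset.sum_congr rfl fun j _ => h1 j, Finset.sum_add_distrib,
      Finset.sum_sub_distrib, hR1, hS2', hS3']
  -- assemble
  rw [show Pmat n * Atil * Ctil * Ctil = Pmat n * (Atil * Ctil * Ctil) from by
      rw [Matrix.mul_assoc (Pmat n) Atil Ctil, Matrix.mul_assoc (Pmat n) (Atil * Ctil) Ctil],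
    show Pmat n * A * C * C = Pmat n * (A * C * C) from by
      rw [Matrix.mul_assoc (Pmat n) A C, Matrix.mul_assoc (Pmat n) (A * C) C],
    show Pmat n * A * C = Pmat n * (A * C) from Matrix.mul_assoc _ _ _,
    show Pmat n * A * A * C = Pmat n * (A * A * C) from by
      rw [Matrix.mul_assoc (Pmat n) A A, Matrix.mul_assoc (Pmat n) (A * A) C],
    Stmt14Aux.traceP hn, Stmt14Aux.traceP hn, Stmt14Aux.traceP hn, Stmt14Aux.traceP hn]
  rw [Finset.sum_congr rfl fun j _ => hLent j,
    Finset.sum_congr rfl fun j _ => hAC j,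
    Finset.sum_congr rfl fun j _ => hACC j,
    Finset.sum_congr rfl fun j _ => hAAC j]
  rw [show ∑ j : Fin n, (∑ r : Fin n, Dmat n d (Fin.rev j) r * c r)
        * (1 - c (Fin.rev j)) * (1 - c (Fin.rev j))
      = ∑ k : Fin n, (∑ r : Fin n, Dmat n d k r * c r) * (1 - c k) * (1 - c k) from
    Fintype.sum_bijective Fin.rev Fin.rev_bijective _ _ (fun j => rfl)]
  rw [hL, hR1, hR2, hR3]
  ring
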